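/- Let G be a k-partite k-uniform hypergraph and define G_i = (E, E_i) for i ∈ [k] as the graph on hyperedges where e, e' are adjacent iff they share a vertex in a part V_j with j ≠ i. Suppose G is vertex-separable and for each i assign to each hyperedge e the label c_i(e) ∈ ℕ of its connected component in G_i. Then the map e ↦ (c_1(e), …, c_k(e)) is injective on E. -/

import Mathlib

/-- A `k`-partite `k`-uniform hypergraph: vertices `V` with parts indexed by `Fin k`,
hyperedges indexed by `E`, each hyperedge selecting exactly one vertex per part. -/
structure KHypergraph (k : ℕ) (V E : Type) where
  part : V → Fin k
  vert : E → Fin k → V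
  hpart : ∀ e i, part (vert e i) = i

namespace KHypergraph

variable {k : ℕ} {V E : Type}

/-- Vertex `v` belongs to hyperedge `e`. -/
def Mem (G : KHypergraph k V E) (v : V) (e : E) : Prop :=
  G.vert e (G.part v) = v

/-- Two vertices are adjacent if they are both contained in a common hyperedge. -/
def Adj (G : KHypergraph k V E) (u v : V) : Prop :=
  ∃ e : E, G.Mem u e ∧ G.Mem v e

/-- `l` is an `s`–`t` path: a nonempty sequence of vertices starting at `s`, ending at `t`,
with consecutive vertices contained in a common hyperedge. -/
def IsPath (G : KHypergraph k V E) (s t : V) (l : List V) : Prop :=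
  l.Chain' G.Adj ∧ l.head? = some s ∧ l.getLast? = some t

/-- Vertex separability: every two distinct vertices of the same part `V_i` can be
separated by removing some part `V_j`, `j ≠ i`. -/
def VertexSeparable (G : KHypergraph k V E) : Prop :=
  ∀ v v' : V, v ≠ v' → G.part v = G.part v' →
    ∃ j : Fin k, j ≠ G.part v ∧
      ∀ l : List V, G.IsPath v v' l → ∃ w ∈ l, G.part w = j

/-- Edge separability: every two distinct hyperedges can be separated by removing
some part `V_j`. -/
def EdgeSeparable (G : KHypergraph k V E) : Prop :=
  ∀ e e' : E, G.vert e ≠ G.vert e' →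
    ∃ j : Fin k, ∀ (v v' : V) (l : List V), G.Mem v e → G.Mem v' e' →
      G.IsPath v v' l → ∃ w ∈ l, G.part w = j

/-- The axis-parallel line in `ℝ^k` representing a vertex `v` of part `i = G.part v`:
all coordinates `j ≠ i` are fixed to `L v j`, coordinate `i` is free. -/
def lineOf (G : KHypergraph k V E) (L : V → Fin k → ℝ) (v : V) : Set (Fin k → ℝ) :=
  {x | ∀ j : Fin k, j ≠ G.part v → x j = L v j}

/-- `(p, L)` is an axis-parallel point line cover representation of `G` in `ℝ^k`:
hyperedges map to pairwise distinct points, vertices map to pairwise distinct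
axis-parallel lines (part `V_i` to direction `i`), and hypergraph incidence coincides
with geometric incidence. -/
def Represents (G : KHypergraph k V E) (p : E → Fin k → ℝ) (L : V → Fin k → ℝ) : Prop :=
  Function.Injective p ∧
  (∀ v v' : V, v ≠ v' → G.lineOf L v ≠ G.lineOf L v') ∧
  (∀ (v : V) (e : E), G.Mem v e ↔ p e ∈ G.lineOf L v)

/-- The auxiliary graph `G_i` on the hyperedges: `e` and `e'` are adjacent iff they
share a vertex in a part `V_j` with `j ≠ i`. -/
def GiAdj (G : KHypergraph k V E) (i : Fin k) (e e' : E) : Prop :=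
  ∃ v : V, G.Mem v e ∧ G.Mem v e' ∧ G.part v ≠ i

end KHypergraph

/-- If `G` is vertex-separable (with hyperedges pairwise distinct as vertex sets) and
`c i e` is a labeling of the hyperedges by their connected components in the auxiliary
graphs `G_i`, then the map `e ↦ (c 1 e, …, c k e)` is injective on `E`. -/
theorem stmt16 {k : ℕ} {V E : Type} (G : KHypergraph k V E)
    (hdist : Function.Injective G.vert) (hsep : G.VertexSeparable)
    (c : Fin k → E → ℕ)
    (hc : ∀ (i : Fin k) (e e' : E),
      c i e = c i e' ↔ Relation.ReflTransGen (G.GiAdj i) e e') :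
    Function.Injective (fun e : E => fun i : Fin k => c i e) := by
  intro e e' h
  by_contra hne
  have hvne : G.vert e ≠ G.vert e' := fun hv => hne (hdist hv)
  obtain ⟨i, hi⟩ : ∃ i, G.vert e i ≠ G.vert e' i := by
    by_contra hall; push_neg at hall; exact hvne (funext hall)
  set v := G.vert e i with hv
  set v' := G.vert e' i with hv'
  have hme : G.Mem v e := by simp [KHypergraph.Mem, hv, G.hpart]
  have hme' : G.Mem v' e' := by simp [KHypergraph.Mem, hv', G.hpart]
  have hpv : G.part v = i := G.hpart e i
  have hpv' : G.part v' = i := G.hpart e' i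
  obtain ⟨j, hji, hj⟩ := hsep v v' hi (hpv.trans hpv'.symm)
  rw [hpv] at hji
  have hrt : Relation.ReflTransGen (G.GiAdj j) e e' :=
    (hc j e e').mp (congrFun h j)
  have key : ∀ b, Relation.ReflTransGen (G.GiAdj j) e b →
      e = b ∨ ∃ u u' l, G.Mem u e ∧ G.Mem u' b ∧ G.IsPath u u' l ∧
        ∀ w ∈ l, G.part w ≠ j := by
    intro b hb
    induction hb with
    | refl => exact Or.inl rfl
    | @tail m c hab hbc ih =>
      obtain ⟨w, hwb, hwc, hwj⟩ := hbc
      rcases ih with rfl | ⟨u, u', l, hue, hu'b, ⟨hch, hhd, hlast⟩, havoid⟩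
      · exact Or.inr ⟨w, w, [w], hwb, hwc,
          ⟨List.isChain_singleton w, rfl, rfl⟩, by simpa using hwj⟩
      · have hlne : l ≠ [] := by
          intro h0; rw [h0] at hhd; simp at hhd
        refine Or.inr ⟨u, w, l ++ [w], hue, hwc, ⟨?_, ?_, ?_⟩, ?_⟩
        · refine List.IsChain.append hch (List.isChain_singleton w) ?_
          intro x hx y hy
          simp only [List.head?_cons, Option.mem_def, Option.some_inj] at hy
          rw [hlast] at hx
          simp only [Option.mem_def, Option.some_inj] at hx
          subst hx; subst hy
          exact ⟨m, hu'b, hwb⟩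
        · rw [List.head?_append, hhd]; rfl
        · exact List.getLast?_concat
        · intro x hx
          rcases List.mem_append.mp hx with hx | hx
          · exact havoid x hx
          · simp at hx; subst hx; exact hwj
  rcases key e' hrt with rfl | ⟨u, u', l, hue, hu'e', ⟨hch, hhd, hlast⟩, havoid⟩
  · exact hne rfl
  · have hlne : l ≠ [] := by intro h0; rw [h0] at hhd; simp at hhd
    have hch2 : List.Chain' G.Adj (l ++ [v']) := by
      refine List.IsChain.append hch (List.isChain_singleton v') ?_
      intro x hx y hy
      simp only [List.head?_cons, Option.mem_def, Option.some_inj] at hy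
      rw [hlast] at hx
      simp only [Option.mem_def, Option.some_inj] at hx
      subst hx; subst hy
      exact ⟨e', hu'e', hme'⟩
    have hch3 : List.Chain' G.Adj (v :: (l ++ [v'])) := by
      refine List.isChain_cons.mpr ?_
      refine ⟨?_, hch2⟩
      intro y hy
      rw [List.head?_append, hhd] at hy
      simp only [Option.mem_def] at hy
      cases hy
      exact ⟨e, hme, hue⟩
    have hpath : G.IsPath v v' (v :: (l ++ [v'])) := by
      refine ⟨hch3, rfl, ?_⟩
      show (v :: (l ++ [v'])).getLast? = some v'
      have : v :: (l ++ [v']) = (v :: l) ++ [v'] := by simp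
      rw [this, List.getLast?_concat]
    obtain ⟨w, hwmem, hwj⟩ := hj _ hpath
    rcases List.mem_cons.mp hwmem with rfl | hwmem
    · exact hji (hwj ▸ hpv ▸ rfl)
    · rcases List.mem_append.mp hwmem with hwl | hwl
      · exact havoid w hwl hwj
      · simp at hwl; subst hwl
        rw [hpv'] at hwj; exact hji hwj.symm
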